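/- If a symmetric reflexive {0,1}-valued function d on X fails the triangle inequality, then there exists a finite sequence in X and a permutation of it such that the discrete uniqueness scores of the two orderings differ. -/

import Mathlib

open Classical in
theorem stmt19 {X : Type*} (d : X → X → ℝ)
    (hvals : ∀ a b, d a b = 0 ∨ d a b = 1)
    (hrefl : ∀ a, d a a = 0)
    (hsymm : ∀ a b, d a b = d b a)
    (htri : ¬ ∀ a b c, d a c ≤ d a b + d b c) :
    ∃ (n : ℕ) (x : Fin n → X) (σ : Equiv.Perm (Fin n)),
      (∑ i : Fin n, if ∀ j < i, d (x (σ i)) (x (σ j)) ≠ 0 then (1 : ℝ) else 0) / n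
        ≠ (∑ i : Fin n, if ∀ j < i, d (x i) (x j) ≠ 0 then (1 : ℝ) else 0) / n := by
  push_neg at htri
  obtain ⟨a, b, c, h⟩ := htri
  have hab : d a b = 0 := by rcases hvals a b with h1 | h1 <;> rcases hvals b c with h2 | h2 <;> rcases hvals a c with h3 | h3 <;> linarith
  have hbc : d b c = 0 := by rcases hvals a b with h1 | h1 <;> rcases hvals b c with h2 | h2 <;> rcases hvals a c with h3 | h3 <;> linarith
  have hac : d a c = 1 := by rcases hvals a b with h1 | h1 <;> rcases hvals b c with h2 | h2 <;> rcases hvals a c with h3 | h3 <;> linarith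
  refine ⟨3, ![a, c, b], finRotate 3, ?_⟩
  have hca : d c a = 1 := (hsymm c a).trans hac
  have hcb : d c b = 0 := (hsymm c b).trans hbc
  rw [Fin.sum_univ_three, Fin.sum_univ_three]
  have hba : d b a = 0 := (hsymm b a).trans hab
  have h0 : ∀ (P : Fin 3 → Prop), (∀ j < (0:Fin 3), P j) := fun P j hj => absurd hj (by omega)
  have h1 : ∀ (P : Fin 3 → Prop), (∀ j < (1:Fin 3), P j) ↔ P 0 := by
    intro P
    constructor
    · intro h; exact h 0 (by omega)
    · intro h j hj
      have : j = 0 := by omega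
      subst this; exact h
  have h2 : ∀ (P : Fin 3 → Prop), (∀ j < (2:Fin 3), P j) ↔ P 0 ∧ P 1 := by
    intro P
    constructor
    · intro h; exact ⟨h 0 (by omega), h 1 (by omega)⟩
    · rintro ⟨p0, p1⟩ j hj
      have : j = 0 ∨ j = 1 := by omega
      rcases this with rfl | rfl <;> assumption
  have s0 : (finRotate 3) (0:Fin 3) = 1 := by decide
  have s1 : (finRotate 3) (1:Fin 3) = 2 := by decide
  have s2 : (finRotate 3) (2:Fin 3) = 0 := by decide
  simp only [s0, s1, s2, h1, h2, Matrix.cons_val_zero, Matrix.cons_val_one, Matrix.head_cons,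
    Matrix.cons_val_two, Matrix.tail_cons]
  have e : (∀ j < (0:Fin 3), d a (![a, c, b] j) ≠ 0) := h0 _
  simp only [eq_true e, if_true]
  simp only [Matrix.cons_val_zero, Matrix.cons_val_one, Matrix.head_cons, Matrix.cons_val_two,
    Matrix.tail_cons, hab, hbc, hca, hcb, hba]
  norm_num
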